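/- Fix 1 ≤ k ≤ 4 and set r = (2√k − 1)/(2k). Consider the two-link network with feasible set X = {(x₁, y₁, x₂, y₂) ∈ ℝ⁴ : all entries ≥ 0, x₁ + x₂ = r, y₁ + y₂ = 1/2}, per-unit link costs c₁ = 1 and c₂(z) = √k·x₂ + (1/√k)·y₂ (experienced equally by both vehicle types), and social cost C(z) = (x₁ + y₁)·1 + (√k·x₂ + (1/√k)·y₂)(x₂ + y₂). Then: (i) the flow z^EQ = (0, 0, r, 1/2) satisfies the variational inequality ⟨c(z^EQ), z^EQ − z⟩ ≤ 0 for all z ∈ X, and indeed c₂(z^EQ) = 1 = c₁; (ii) C(z^EQ) = (k + 2√k − 1)/(2k); (iii) the minimum of C over X equals (5√k − 2)/(4k), attained at (r, 0, 0, 1/2). Consequently the ratio of equilibrium to optimal social cost equals (2k + 4√k − 2)/(5√k − 2), which equals 4/3 when k = 1. -/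

import Mathlib

open Matrix

lemma key_ineq (s x y : ℝ) (hs1 : 1 ≤ s) (hx : 0 ≤ x)
    (hxr : 2*s^2*x ≤ 2*s - 1) (hy : 0 ≤ y) (hy2 : y ≤ 1/2) :
    0 ≤ 2*s - 1 - 4*s*x - 4*s*y + 4*s^2*x^2 + 4*s^2*x*y + 4*x*y + 4*y^2 := by
  have hu : 0 ≤ 1/2 - y := by linarith
  rcases le_or_gt ((s^2+1)*x) (s-1) with h | h
  · nlinarith [mul_nonneg hu hu, mul_nonneg hu (sub_nonneg.mpr h), sq_nonneg x,
      mul_nonneg hx (sq_nonneg (s-1))]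
  · have ha : 0 ≤ (s^2+1)*x - (s-1) := by linarith
    have hb : 0 ≤ (2*s-1) - 2*s^2*x := by linarith
    have disc : ((s^2+1)*x-(s-1))^2 ≤ 4*s^2*x^2 + 2*x*(s-1)^2 := by
      nlinarith [mul_nonneg ha hb, mul_nonneg (mul_nonneg ha hb) (sub_nonneg.mpr hs1),
        mul_nonneg (mul_nonneg ha hb) hx, sq_nonneg (s-1), mul_nonneg hx (sub_nonneg.mpr hs1)]
    nlinarith [sq_nonneg (2*(1/2-y) - ((s^2+1)*x - (s-1))), disc]

theorem example_one_sided (k r : ℝ) (hk1 : 1 ≤ k) (hk4 : k ≤ 4)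
    (hr : r = (2 * Real.sqrt k - 1) / (2 * k))
    (X : Set (Fin 4 → ℝ))
    (hX : X = {z | (∀ i, 0 ≤ z i) ∧ z 0 + z 2 = r ∧ z 1 + z 3 = 1 / 2})
    (c : (Fin 4 → ℝ) → (Fin 4 → ℝ))
    (hc : ∀ z, c z = ![1, 1, Real.sqrt k * z 2 + (1 / Real.sqrt k) * z 3,
      Real.sqrt k * z 2 + (1 / Real.sqrt k) * z 3])
    (C : (Fin 4 → ℝ) → ℝ)
    (hC : ∀ z, C z = (z 0 + z 1) * 1 +
      (Real.sqrt k * z 2 + (1 / Real.sqrt k) * z 3) * (z 2 + z 3))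
    (zeq : Fin 4 → ℝ) (hzeq : zeq = ![0, 0, r, 1 / 2]) :
    (∀ z ∈ X, (c zeq) ⬝ᵥ (zeq - z) ≤ 0) ∧
    Real.sqrt k * zeq 2 + (1 / Real.sqrt k) * zeq 3 = 1 ∧
    C zeq = (k + 2 * Real.sqrt k - 1) / (2 * k) ∧
    IsLeast {v : ℝ | ∃ z ∈ X, v = C z} ((5 * Real.sqrt k - 2) / (4 * k)) ∧
    (![r, 0, 0, 1 / 2] : Fin 4 → ℝ) ∈ X ∧
    C ![r, 0, 0, 1 / 2] = (5 * Real.sqrt k - 2) / (4 * k) ∧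
    C zeq / ((5 * Real.sqrt k - 2) / (4 * k))
      = (2 * k + 4 * Real.sqrt k - 2) / (5 * Real.sqrt k - 2) ∧
    (k = 1 → (2 * k + 4 * Real.sqrt k - 2) / (5 * Real.sqrt k - 2) = 4 / 3) := by
  have hk0 : (0:ℝ) < k := by linarith
  set s := Real.sqrt k with hsdef
  have hs2k : s^2 = k := Real.sq_sqrt hk0.le
  have hsnn : 0 ≤ s := Real.sqrt_nonneg k
  have hs1 : 1 ≤ s := by nlinarith
  have hs2 : s ≤ 2 := by nlinarith
  have hs0 : 0 < s := by linarith
  have hrs : r = (2*s - 1) / (2*s^2) := by rw [hr, ← hs2k]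
  have hr0 : 0 ≤ r := by rw [hrs]; exact div_nonneg (by linarith) (by positivity)
  -- c₂ at equilibrium equals 1
  have hc2 : s * zeq 2 + (1 / s) * zeq 3 = 1 := by
    rw [hzeq]
    show s * r + 1 / s * (1 / 2) = 1
    rw [hrs]; field_simp; ring
  have hcz : c zeq = ![1, 1, 1, 1] := by
    rw [hc, hc2]
  -- equilibrium cost
  have hCzeq : C zeq = (k + 2 * s - 1) / (2 * k) := by
    rw [hC, hzeq]
    show (0 + 0) * 1 + (s * r + 1 / s * (1 / 2)) * (r + 1 / 2) = _
    rw [hrs, ← hs2k]; field_simp; ring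
  -- membership of the optimal flow
  have hmem : (![r, 0, 0, 1 / 2] : Fin 4 → ℝ) ∈ X := by
    rw [hX]
    refine ⟨?_, by norm_num; rfl, by norm_num; rfl⟩
    intro i; fin_cases i <;> norm_num [hr0]
  -- cost of the optimal flow
  have hCopt : C ![r, 0, 0, 1 / 2] = (5 * s - 2) / (4 * k) := by
    rw [hC]
    show (r + 0) * 1 + (s * 0 + 1 / s * (1 / 2)) * (0 + 1 / 2) = _
    rw [hrs, ← hs2k]; field_simp; ring
  have h52 : 0 < 5 * s - 2 := by linarith
  refine ⟨?_, hc2, hCzeq, ⟨⟨_, hmem, hCopt.symm⟩, ?_⟩, hmem, hCopt, ?_, ?_⟩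
  · -- variational inequality
    intro z hz
    rw [hX] at hz
    obtain ⟨hpos, h02, h13⟩ := hz
    rw [hcz]
    simp only [dotProduct, Fin.sum_univ_four, Pi.sub_apply, hzeq]
    norm_num
    have e1 : (![1, 1, 1, 1] : Fin 4 → ℝ) 2 = 1 := rfl
    have e2 : (![1, 1, 1, 1] : Fin 4 → ℝ) 3 = 1 := rfl
    have e3 : (![0, 0, r, 1 / 2] : Fin 4 → ℝ) 2 = r := rfl
    have e4 : (![0, 0, r, 1 / 2] : Fin 4 → ℝ) 3 = 1 / 2 := rfl
    rw [e1, e2, e3, e4]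
    linarith
  · -- lower bound
    rintro v ⟨z, hz, rfl⟩
    rw [hX] at hz
    obtain ⟨hpos, h02, h13⟩ := hz
    have hx : 0 ≤ z 2 := hpos 2
    have hy : 0 ≤ z 3 := hpos 3
    have hy2 : z 3 ≤ 1 / 2 := by have := hpos 1; linarith
    have hxr : 2 * s ^ 2 * z 2 ≤ 2 * s - 1 := by
      have h0 : 0 ≤ z 0 := hpos 0
      have hz2r : z 2 ≤ (2 * s - 1) / (2 * s ^ 2) := by rw [← hrs]; linarith
      have := (le_div_iff₀ (by positivity : (0:ℝ) < 2 * s ^ 2)).mp hz2r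
      linarith
    have key := key_ineq s (z 2) (z 3) hs1 hx hxr hy hy2
    have hz0 : z 0 = (2 * s - 1) / (2 * s ^ 2) - z 2 := by rw [hrs] at h02; linarith
    have hz1 : z 1 = 1 / 2 - z 3 := by linarith
    rw [hC]
    have hE : (z 0 + z 1) * 1 + (s * z 2 + 1 / s * z 3) * (z 2 + z 3)
        = (5 * s - 2) / (4 * s ^ 2)
          + s * (2*s - 1 - 4*s*(z 2) - 4*s*(z 3) + 4*s^2*(z 2)^2 + 4*s^2*(z 2)*(z 3)
                + 4*(z 2)*(z 3) + 4*(z 3)^2) / (4 * s ^ 2) := by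
      rw [hz0, hz1]; field_simp; ring
    rw [hE, ← hs2k]
    have : 0 ≤ s * (2*s - 1 - 4*s*(z 2) - 4*s*(z 3) + 4*s^2*(z 2)^2 + 4*s^2*(z 2)*(z 3)
                + 4*(z 2)*(z 3) + 4*(z 3)^2) / (4 * s ^ 2) :=
      div_nonneg (mul_nonneg hsnn key) (by positivity)
    linarith
  · -- ratio
    rw [hCzeq, ← hs2k]
    field_simp
    ring
  · -- k = 1 case
    intro hk
    have hs : s = 1 := by rw [hsdef, hk, Real.sqrt_one]
    rw [hk, hs]; norm_num
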